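/- (Moments of the Wigner semicircle law.) For every m ∈ ℕ: ∫_{−2}^{2} x^{2m} · (√(4 − x²)/(2π)) dx = Catalan(m) = (2m)!/((m+1)! m!), and ∫_{−2}^{2} x^{2m+1} · (√(4 − x²)/(2π)) dx = 0. -/

import Mathlib

open MeasureTheory intervalIntegral Real Finset

private lemma integral_cos_pow_even' (n : ℕ) :
    (∫ x in (0:ℝ)..π, Real.cos x ^ (2 * n)) =
      π * ∏ i ∈ range n, (2 * (i : ℝ) + 1) / (2 * i + 2) := by
  induction' n with k ih
  · simp
  rw [prod_range_succ_comm, mul_left_comm, ← ih, Nat.mul_succ, integral_cos_pow]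
  norm_cast
  simp [-Nat.cast_add]

private lemma cb_succ (k : ℕ) : ((k:ℝ) + 1) * (Nat.centralBinom (k + 1) : ℝ)
    = 2 * (2 * k + 1) * (Nat.centralBinom k : ℝ) := by
  exact_mod_cast Nat.succ_mul_centralBinom_succ k

private lemma prod_eq_centralBinom (n : ℕ) :
    (∏ i ∈ range n, (2 * (i : ℝ) + 1) / (2 * i + 2)) =
      (Nat.centralBinom n : ℝ) / 4 ^ n := by
  induction' n with k ih
  · simp [Nat.centralBinom]
  rw [prod_range_succ, ih, div_mul_div_comm,
    div_eq_div_iff (by positivity) (by positivity)]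
  linear_combination (-(2 * (4:ℝ) ^ k)) * cb_succ k

private lemma catalan_real (m : ℕ) :
    (catalan m : ℝ) = (Nat.centralBinom m : ℝ) / (m + 1) := by
  rw [catalan_eq_centralBinom_div]
  rw [Nat.cast_div m.succ_dvd_centralBinom (by exact_mod_cast Nat.succ_ne_zero m)]
  push_cast; ring_nf

/-- **Moments of the Wigner semicircle law.** The even moments are the Catalan
numbers `(2m)!/((m+1)! m!)`, the odd moments vanish. -/
theorem wigner_semicircle_moments (m : ℕ) :
    (∫ x in (-2 : ℝ)..2, x ^ (2 * m) * (Real.sqrt (4 - x ^ 2) / (2 * Real.pi)) =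
        (catalan m : ℝ)) ∧
    ((catalan m : ℝ) = ((2 * m).factorial : ℝ) / ((m + 1).factorial * m.factorial)) ∧
    (∫ x in (-2 : ℝ)..2, x ^ (2 * m + 1) * (Real.sqrt (4 - x ^ 2) / (2 * Real.pi)) = 0) := by
  refine ⟨?_, ?_, ?_⟩
  · -- even moments
    have hg : Continuous fun y : ℝ => y ^ (2 * m) * Real.sqrt (4 - y ^ 2) := by
      fun_prop
    have key := integral_comp_mul_deriv (a := π) (b := 0)
      (f := fun θ => 2 * Real.cos θ) (f' := fun θ => 2 * -Real.sin θ)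
      (g := fun y => y ^ (2 * m) * Real.sqrt (4 - y ^ 2))
      (fun x _ => (Real.hasDerivAt_cos x).const_mul 2)
      (by fun_prop) hg
    simp only [Real.cos_pi, Real.cos_zero, mul_one] at key
    have h2 : 2 * (-1 : ℝ) = -2 := by norm_num
    rw [h2] at key
    have hint : (∫ y in (-2:ℝ)..2, y ^ (2 * m) * Real.sqrt (4 - y ^ 2))
        = ∫ x in (0:ℝ)..π, ((2:ℝ) ^ (2 * m + 2)) *
            (Real.cos x ^ (2 * m) - Real.cos x ^ (2 * (m + 1))) := by
      rw [← key, integral_symm]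
      rw [← intervalIntegral.integral_neg]
      apply intervalIntegral.integral_congr
      intro x hx
      rw [Set.uIcc_of_le Real.pi_nonneg] at hx
      have hs : 0 ≤ Real.sin x := Real.sin_nonneg_of_nonneg_of_le_pi hx.1 hx.2
      have hsq : Real.sqrt (4 - (2 * Real.cos x) ^ 2) = 2 * Real.sin x := by
        have : 4 - (2 * Real.cos x) ^ 2 = (2 * Real.sin x) ^ 2 := by
          have := Real.sin_sq_add_cos_sq x; nlinarith
        rw [this, Real.sqrt_sq (by positivity)]
      have hc2 : Real.sin x ^ 2 = 1 - Real.cos x ^ 2 := by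
        have := Real.sin_sq_add_cos_sq x; linarith
      simp only [Function.comp]
      rw [hsq]
      linear_combination (4 * (2:ℝ) ^ (2*m) * Real.cos x ^ (2*m)) * hc2
    have hmul : (∫ x in (-2:ℝ)..2, x ^ (2*m) * (Real.sqrt (4-x^2) / (2*π)))
        = (∫ x in (-2:ℝ)..2, x ^ (2*m) * Real.sqrt (4-x^2)) * (2*π)⁻¹ := by
      rw [← intervalIntegral.integral_mul_const]
      congr 1; funext x; ring
    have hi1 : IntervalIntegrable (fun x => Real.cos x ^ (2*m)) volume 0 π :=
      (Continuous.pow Real.continuous_cos _).intervalIntegrable _ _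
    have hi2 : IntervalIntegrable (fun x => Real.cos x ^ (2*(m+1))) volume 0 π :=
      (Continuous.pow Real.continuous_cos _).intervalIntegrable _ _
    rw [hmul, hint, intervalIntegral.integral_const_mul,
      intervalIntegral.integral_sub hi1 hi2,
      integral_cos_pow_even' m, integral_cos_pow_even' (m+1),
      prod_eq_centralBinom, prod_eq_centralBinom, catalan_real]
    have hπ : Real.pi ≠ 0 := Real.pi_ne_zero
    have hm1 : ((m:ℝ) + 1) ≠ 0 := by positivity
    have h4 : ((4:ℝ) ^ m) ≠ 0 := by positivity
    have hpow : (2:ℝ) ^ (2 * m + 2) = 4 * 4 ^ m := by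
      rw [pow_add, pow_mul]; norm_num; ring
    have hcb' : (Nat.centralBinom (m+1) : ℝ)
        = 2 * (2 * m + 1) * (Nat.centralBinom m : ℝ) / ((m:ℝ) + 1) := by
      field_simp
      linear_combination cb_succ m
    have h41 : ((4:ℝ) ^ (m + 1)) = 4 * 4 ^ m := by ring
    rw [hpow, hcb', h41]
    field_simp
    ring
  · -- catalan formula
    rw [catalan_real, Nat.centralBinom]
    have h := Nat.choose_mul_factorial_mul_factorial (show m ≤ 2 * m by omega)
    rw [show 2 * m - m = m by omega] at h
    have h' : ((2*m).choose m : ℝ) * (m.factorial : ℝ) * (m.factorial : ℝ)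
        = ((2*m).factorial : ℝ) := by exact_mod_cast h
    have hfac : ((m + 1).factorial : ℝ) = ((m:ℝ) + 1) * m.factorial := by
      push_cast [Nat.factorial_succ]; ring
    have hm1 : ((m:ℝ) + 1) ≠ 0 := by positivity
    have hf : ((m.factorial : ℝ)) ≠ 0 := by
      exact_mod_cast m.factorial_pos.ne'
    rw [hfac]
    field_simp
    linear_combination h'
  · -- odd moments
    have h := intervalIntegral.integral_comp_neg (a := (-2:ℝ)) (b := 2)
      (f := fun x => x ^ (2 * m + 1) * (Real.sqrt (4 - x ^ 2) / (2 * Real.pi)))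
    simp only [neg_neg] at h
    have heq : (∫ x in (-2:ℝ)..2,
        (-x) ^ (2 * m + 1) * (Real.sqrt (4 - (-x) ^ 2) / (2 * Real.pi)))
        = -∫ x in (-2:ℝ)..2, x ^ (2 * m + 1) * (Real.sqrt (4 - x ^ 2) / (2 * Real.pi)) := by
      rw [← intervalIntegral.integral_neg]
      congr 1; funext x
      rw [Odd.neg_pow ⟨m, by ring⟩, neg_sq]; ring
    rw [heq] at h
    linarith [h]
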